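/- Let n, k be integers with n > 2k ≥ 2, and let a = a_{n,k} := (∏_{j=-k}^{k-1} (n+2j))^{-1/k}. Define U(x) = (1 + a|x|²)^{-(n-2k)/2} for x ∈ ℝⁿ. Then U satisfies Δ^k U = U^{(n+2k)/(n-2k)} on ℝⁿ, where Δ is the (geometer's, nonnegative) Euclidean Laplacian. -/

import Mathlib

noncomputable section

/-- The (geometer's, nonnegative) Euclidean Laplacian `Δ f = -∑ ∂²f/∂xᵢ²`. -/
def lap {n : ℕ} (f : EuclideanSpace ℝ (Fin n) → ℝ) : EuclideanSpace ℝ (Fin n) → ℝ :=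
  fun x => -∑ i : Fin n,
    fderiv ℝ (fun y => fderiv ℝ f y (EuclideanSpace.single i 1)) x (EuclideanSpace.single i 1)

/-- The constant `a_{n,k} = (∏_{j=-k}^{k-1} (n+2j))^{-1/k}`. -/
def ank (n k : ℕ) : ℝ :=
  (∏ j ∈ Finset.range (2 * k), ((n:ℝ) + 2 * (j:ℝ) - 2 * (k:ℝ))) ^ (-(1 / (k:ℝ)))

/-- The standard bubble `U(x) = (1 + a_{n,k}|x|²)^{-(n-2k)/2}`. -/
def Ufun (n k : ℕ) : EuclideanSpace ℝ (Fin n) → ℝ :=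
  fun x => (1 + ank n k * ‖x‖ ^ 2) ^ (-(((n:ℝ) - 2 * (k:ℝ)) / 2))

namespace Stmt2

abbrev E (n : ℕ) := EuclideanSpace ℝ (Fin n)

variable {n : ℕ}

def G (a p : ℝ) : E n → ℝ := fun x => (1 + a * ‖x‖ ^ 2) ^ p

lemma hv_pos {a : ℝ} (ha : 0 < a) (x : E n) : 0 < 1 + a * ‖x‖ ^ 2 := by positivity

lemma hasFDerivAt_v (a : ℝ) (x : E n) :
    HasFDerivAt (fun y : E n => 1 + a * ‖y‖ ^ 2) ((2 * a) • innerSL ℝ x) x := by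
  have h3 := (((hasStrictFDerivAt_norm_sq x).hasFDerivAt).const_mul a).const_add 1
  refine h3.congr_fderiv ?_
  ext y
  simp [two_smul]
  ring

lemma hasFDerivAt_G {a : ℝ} (ha : 0 < a) (p : ℝ) (x : E n) :
    HasFDerivAt (G a p)
      ((p * (1 + a * ‖x‖ ^ 2) ^ (p - 1) * (2 * a)) • innerSL ℝ x) x := by
  have h := (hasFDerivAt_v a x).rpow_const (p := p) (Or.inl (hv_pos ha x).ne')
  refine h.congr_fderiv ?_
  rw [smul_smul]

lemma sum_coord_sq (x : E n) : ∑ i : Fin n, x i ^ 2 = ‖x‖ ^ 2 := by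
  rw [EuclideanSpace.norm_eq, Real.sq_sqrt (by positivity)]
  simp [sq_abs]

lemma innerSL_single (x : E n) (j : Fin n) :
    (innerSL ℝ x) (EuclideanSpace.single j 1) = x j := by
  rw [innerSL_apply_apply, EuclideanSpace.inner_single_right]
  simp

lemma hasFDerivAt_comb {a : ℝ} (ha : 0 < a) (M : ℕ) (c q : ℕ → ℝ) (y : E n) :
    HasFDerivAt (fun z : E n => ∑ i ∈ Finset.range M, c i * G a (q i) z)
      (∑ i ∈ Finset.range M,
        c i • ((q i * (1 + a * ‖y‖ ^ 2) ^ (q i - 1) * (2 * a)) • innerSL ℝ y)) y :=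
  HasFDerivAt.fun_sum fun i _ => (hasFDerivAt_G ha (q i) y).const_mul (c i)

lemma fderiv_comb_apply {a : ℝ} (ha : 0 < a) (M : ℕ) (c q : ℕ → ℝ) (y : E n) (j : Fin n) :
    fderiv ℝ (fun z : E n => ∑ i ∈ Finset.range M, c i * G a (q i) z) y
        (EuclideanSpace.single j 1)
      = ∑ i ∈ Finset.range M,
          (c i * (q i * (2 * a))) * ((1 + a * ‖y‖ ^ 2) ^ (q i - 1) * y j) := by
  rw [(hasFDerivAt_comb ha M c q y).fderiv]
  rw [ContinuousLinearMap.sum_apply]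
  refine Finset.sum_congr rfl fun i _ => ?_
  rw [ContinuousLinearMap.smul_apply, ContinuousLinearMap.smul_apply, innerSL_single]
  simp
  ring

lemma hasFDerivAt_aux {a : ℝ} (ha : 0 < a) (p c' : ℝ) (j : Fin n) (x : E n) :
    HasFDerivAt (fun z : E n => c' * ((1 + a * ‖z‖ ^ 2) ^ p * z j))
      (c' • ((1 + a * ‖x‖ ^ 2) ^ p • (EuclideanSpace.proj (𝕜 := ℝ) j)
        + x j • ((p * (1 + a * ‖x‖ ^ 2) ^ (p - 1) * (2 * a)) • innerSL ℝ x))) x :=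
  ((hasFDerivAt_G ha p x).mul ((EuclideanSpace.proj (𝕜 := ℝ) j).hasFDerivAt)).const_mul c'

lemma lap_comb_raw {a : ℝ} (ha : 0 < a) (M : ℕ) (c q : ℕ → ℝ) (x : E n) :
    lap (fun z : E n => ∑ i ∈ Finset.range M, c i * G a (q i) z) x
      = -∑ i ∈ Finset.range M, (c i * (q i * (2 * a))) *
          ((q i - 1) * (1 + a * ‖x‖ ^ 2) ^ (q i - 2) * (2 * a) * ‖x‖ ^ 2
            + (n : ℝ) * (1 + a * ‖x‖ ^ 2) ^ (q i - 1)) := by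
  rw [lap]
  have step1 : ∀ j : Fin n,
      fderiv ℝ (fun y => fderiv ℝ
          (fun z : E n => ∑ i ∈ Finset.range M, c i * G a (q i) z) y
          (EuclideanSpace.single j 1)) x (EuclideanSpace.single j 1)
        = ∑ i ∈ Finset.range M, (c i * (q i * (2 * a))) *
            ((q i - 1) * (1 + a * ‖x‖ ^ 2) ^ (q i - 2) * (2 * a) * (x j) * (x j)
              + (1 + a * ‖x‖ ^ 2) ^ (q i - 1)) := by
    intro j
    have he : (fun y => fderiv ℝ
          (fun z : E n => ∑ i ∈ Finset.range M, c i * G a (q i) z) y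
          (EuclideanSpace.single j 1))
        = fun y => ∑ i ∈ Finset.range M,
            (c i * (q i * (2 * a))) * ((1 + a * ‖y‖ ^ 2) ^ (q i - 1) * y j) := by
      funext y
      exact fderiv_comb_apply ha M c q y j
    rw [he]
    have hD := HasFDerivAt.fun_sum (fun i (_ : i ∈ Finset.range M) =>
      hasFDerivAt_aux ha (q i - 1) (c i * (q i * (2 * a))) j x)
    rw [hD.fderiv, ContinuousLinearMap.sum_apply]
    refine Finset.sum_congr rfl fun i _ => ?_
    rw [ContinuousLinearMap.smul_apply, ContinuousLinearMap.add_apply,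
      ContinuousLinearMap.smul_apply, ContinuousLinearMap.smul_apply,
      ContinuousLinearMap.smul_apply, innerSL_single]
    simp only [smul_eq_mul, PiLp.proj_apply, EuclideanSpace.single_apply, if_pos rfl, if_true]
    ring_nf
  simp_rw [step1]
  rw [Finset.sum_comm]
  congr 1
  refine Finset.sum_congr rfl fun i _ => ?_
  have key : ∀ K A D : ℝ, ∑ j : Fin n, K * (A * x j * x j + D) = K * (A * ‖x‖ ^ 2 + ↑n * D) := by
    intro K A D
    calc ∑ j : Fin n, K * (A * x j * x j + D)
        = ∑ j : Fin n, (K * A * (x j) ^ 2 + K * D) := by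
          refine Finset.sum_congr rfl fun j _ => by ring
      _ = K * A * (∑ j : Fin n, (x j) ^ 2) + (Finset.univ.card (α := Fin n) : ℝ) * (K * D) := by
          rw [Finset.sum_add_distrib, ← Finset.mul_sum, Finset.sum_const, nsmul_eq_mul]
      _ = K * (A * ‖x‖ ^ 2 + ↑n * D) := by
          rw [sum_coord_sq, Finset.card_univ, Fintype.card_fin]; ring
  exact key _ _ _

def mu (a nn p : ℝ) : ℝ := -2 * a * p * (2 * (p - 1) + nn)

def nu (a p : ℝ) : ℝ := 4 * a * p * (p - 1)

lemma lap_comb {a : ℝ} (ha : 0 < a) (M : ℕ) (c q : ℕ → ℝ) (x : E n) :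
    lap (fun z : E n => ∑ i ∈ Finset.range M, c i * G a (q i) z) x
      = ∑ i ∈ Finset.range M, c i *
          (mu a n (q i) * G a (q i - 1) x + nu a (q i) * G a (q i - 2) x) := by
  rw [lap_comb_raw ha M c q x, neg_eq_iff_eq_neg, ← Finset.sum_neg_distrib]
  refine Finset.sum_congr rfl fun i _ => ?_
  have hsub : (1 + a * ‖x‖ ^ 2) ^ (q i - 1)
      = (1 + a * ‖x‖ ^ 2) ^ (q i - 2) * (1 + a * ‖x‖ ^ 2) := by
    rw [← Real.rpow_add_one (hv_pos ha x).ne' (q i - 2)]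
    ring_nf
  simp only [G, mu, nu, hsub]
  ring

def Cf (a nn p₀ : ℝ) : ℕ → ℕ → ℝ
  | 0, 0 => 1
  | 0, _ + 1 => 0
  | m + 1, 0 => mu a nn (p₀ - m) * Cf a nn p₀ m 0
  | m + 1, i + 1 => mu a nn (p₀ - m - (i + 1)) * Cf a nn p₀ m (i + 1)
      + nu a (p₀ - m - i) * Cf a nn p₀ m i

lemma Cf_gt (a nn p₀ : ℝ) : ∀ m i, m < i → Cf a nn p₀ m i = 0 := by
  intro m
  induction m with
  | zero => intro i hi; match i, hi with
    | i + 1, _ => rfl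
  | succ m ih =>
    intro i hi
    match i, hi with
    | i + 1, hi =>
      have h1 : m < i + 1 := by omega
      have h2 : m < i := by omega
      rw [Cf, ih _ h1, ih _ h2]
      ring

lemma sum_reindex (F S T R : ℕ → ℝ) (m : ℕ)
    (h0 : F 0 = S 0) (hsucc : ∀ i, F (i + 1) = S (i + 1) + T i) (htop : S (m + 1) = 0)
    (hR : ∀ i, S i + T i = R i) :
    ∑ i ∈ Finset.range (m + 1 + 1), F i = ∑ i ∈ Finset.range (m + 1), R i := by
  rw [Finset.sum_range_succ' F (m + 1)]
  have h1 : ∑ i ∈ Finset.range (m + 1), F (i + 1)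
      = ∑ i ∈ Finset.range (m + 1), (S (i + 1) + T i) :=
    Finset.sum_congr rfl fun i _ => hsucc i
  rw [h1, h0, Finset.sum_add_distrib, add_right_comm, ← Finset.sum_range_succ' S (m + 1),
    Finset.sum_range_succ S (m + 1), htop, add_zero, ← Finset.sum_add_distrib]
  exact Finset.sum_congr rfl fun i _ => hR i

lemma iter_lap {a : ℝ} (ha : 0 < a) (p₀ : ℝ) (m : ℕ) :
    lap^[m] (G a p₀ : E n → ℝ)
      = fun x => ∑ i ∈ Finset.range (m + 1), Cf a n p₀ m i * G a (p₀ - m - i) x := by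
  induction m with
  | zero =>
    funext x
    simp [Cf, G]
  | succ m ih =>
    rw [Function.iterate_succ_apply', ih]
    funext x
    rw [lap_comb ha (m + 1) (fun i => Cf a n p₀ m i) (fun i => p₀ - m - i) x]
    symm
    refine sum_reindex _
      (fun i : ℕ => mu a n (p₀ - m - i) * Cf a n p₀ m i * G a (p₀ - m - i - 1) x)
      (fun i : ℕ => Cf a n p₀ m i * nu a (p₀ - m - i) * G a (p₀ - m - i - 2) x)
      _ m ?_ ?_ ?_ ?_
    · rw [Cf]
      rw [show (p₀ - (↑(m + 1) : ℝ) - (↑(0:ℕ) : ℝ)) = p₀ - (m:ℝ) - (↑(0:ℕ):ℝ) - 1 by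
        push_cast; ring_nf]
      ring_nf
    · intro i
      rw [Cf]
      rw [show (p₀ - (↑(m + 1) : ℝ) - (↑(i + 1) : ℝ)) = p₀ - (m:ℝ) - (i:ℕ) - 2 by
        push_cast; ring]
      rw [show (p₀ - (m:ℝ) - (↑(i + 1):ℝ) - 1) = p₀ - (m:ℝ) - (i:ℕ) - 2 by
        push_cast; ring]
      push_cast
      ring
    · rw [Cf_gt a n p₀ m (m + 1) (by omega)]
      ring
    · intro i
      ring

def Pf (b0 : ℝ) : ℕ → ℝ := fun t => ∏ j ∈ Finset.range t, (b0 + j)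

lemma Pf_succ (b0 : ℝ) (t : ℕ) : Pf b0 (t + 1) = Pf b0 t * (b0 + t) :=
  Finset.prod_range_succ _ _

def Qf (nn b0 : ℝ) (i m : ℕ) : ℝ := ∏ j ∈ Finset.Ico i m, (nn - 2 * b0 - 2 * (j:ℝ) - 2)

lemma Qf_top (nn b0 : ℝ) {i m : ℕ} (h : i ≤ m) :
    Qf nn b0 i (m + 1) = Qf nn b0 i m * (nn - 2 * b0 - 2 * (m:ℝ) - 2) :=
  Finset.prod_Ico_succ_top h _

lemma Qf_bot (nn b0 : ℝ) {i m : ℕ} (h : i < m) :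
    Qf nn b0 i m = (nn - 2 * b0 - 2 * (i:ℝ) - 2) * Qf nn b0 (i + 1) m :=
  Finset.prod_eq_prod_Ico_succ_bot h _

lemma Qf_self (nn b0 : ℝ) (i : ℕ) : Qf nn b0 i i = 1 := by
  rw [Qf, Finset.Ico_self, Finset.prod_empty]

lemma Cf_closed (a nn b0 : ℝ) : ∀ m i : ℕ, Cf a nn (-b0) m i
    = (m.choose i : ℝ) * 2 ^ (m + i) * a ^ m * Pf b0 (m + i) * Qf nn b0 i m := by
  intro m
  induction m with
  | zero =>
    intro i
    match i with
    | 0 => simp [Cf, Pf, Qf]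
    | i + 1 => simp [Cf_gt a nn (-b0) 0 (i+1) (by omega), Nat.choose_eq_zero_of_lt]
  | succ m ih =>
    intro i
    match i with
    | 0 =>
      rw [Cf, ih 0]
      have hQ := Qf_top nn b0 (Nat.zero_le m)
      have hP : Pf b0 (m + 1 + 0) = Pf b0 (m + 0) * (b0 + (m:ℝ)) := by
        rw [Nat.add_zero, Nat.add_zero]
        exact Pf_succ b0 m
      rw [hQ, hP, Nat.choose_zero_right, Nat.choose_zero_right, mu]
      push_cast
      ring
    | i + 1 =>
      by_cases h1 : i < m
      · rw [Cf, ih (i + 1), ih i]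
        have hP2 : Pf b0 (m + 1 + (i + 1)) = Pf b0 (m + i) * (b0 + (↑(m+i):ℝ))
            * (b0 + (↑(m+i+1):ℝ)) := by
          rw [show m + 1 + (i + 1) = (m + i + 1) + 1 by omega, Pf_succ, Pf_succ]
        have hP1 : Pf b0 (m + (i + 1)) = Pf b0 (m + i) * (b0 + (↑(m+i):ℝ)) := Pf_succ b0 (m + i)
        have hQ1 : Qf nn b0 (i + 1) (m + 1)
            = Qf nn b0 (i + 1) m * (nn - 2 * b0 - 2 * (m:ℝ) - 2) := Qf_top nn b0 h1
        have hQ2 : Qf nn b0 i m = (nn - 2 * b0 - 2 * (i:ℝ) - 2) * Qf nn b0 (i + 1) m :=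
          Qf_bot nn b0 h1
        rw [hP2, hP1, hQ1, hQ2]
        have hPascal : ((m + 1).choose (i + 1) : ℝ) = (m.choose i : ℝ) + (m.choose (i+1) : ℝ) := by
          rw [Nat.choose_succ_succ]
          push_cast
          ring
        have hsr : (m.choose (i+1) : ℝ) * ((i:ℝ) + 1) = (m.choose i : ℝ) * ((m:ℝ) - (i:ℝ)) := by
          have h := congrArg (Nat.cast : ℕ → ℝ) (Nat.choose_succ_right_eq m i)
          push_cast [Nat.cast_sub h1.le] at h
          exact h
        rw [mu, nu]
        push_cast
        linear_combination
          (-((nn - 2*b0 - 2 - 2*(m:ℝ)) * (2:ℝ)^(m+i) * 4 * a^(m+1) * Pf b0 (m+i)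
            * (b0 + (m:ℝ) + (i:ℝ)) * (b0 + (m:ℝ) + (i:ℝ) + 1) * Qf nn b0 (i+1) m)) * hPascal
          + (-((2:ℝ)^(m+i) * 8 * a^(m+1) * Pf b0 (m+i)
            * (b0 + (m:ℝ) + (i:ℝ)) * (b0 + (m:ℝ) + (i:ℝ) + 1) * Qf nn b0 (i+1) m)) * hsr
      · by_cases h2 : i = m
        · subst h2
          rw [Cf, Cf_gt a nn (-b0) i (i + 1) (by omega), ih i]
          have hP2 : Pf b0 (i + 1 + (i + 1)) = Pf b0 (i + i) * (b0 + (↑(i+i):ℝ))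
              * (b0 + (↑(i+i+1):ℝ)) := by
            rw [show i + 1 + (i + 1) = (i + i + 1) + 1 by omega, Pf_succ, Pf_succ]
          rw [hP2, Qf_self, Qf_self, Nat.choose_self, Nat.choose_self, nu]
          push_cast
          ring
        · have h3 : m < i := by omega
          rw [Cf, Cf_gt a nn (-b0) m (i + 1) (by omega), Cf_gt a nn (-b0) m i h3,
            Nat.choose_eq_zero_of_lt (by omega)]
          push_cast
          ring

end Stmt2

open Stmt2

/-- `Δ^k U = U^{(n+2k)/(n-2k)}` on `ℝⁿ`. -/
theorem stmt2 (n k : ℕ) (hk : 2 ≤ 2 * k) (hn : 2 * k < n) :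
    ∀ x : EuclideanSpace ℝ (Fin n),
      (lap^[k]) (Ufun n k) x = Ufun n k x ^ (((n:ℝ) + 2 * (k:ℝ)) / ((n:ℝ) - 2 * (k:ℝ))) := by
  intro x
  have hk1 : 1 ≤ k := by omega
  have hk0 : (k:ℝ) ≠ 0 := Nat.cast_ne_zero.mpr (by omega)
  have hnk : (0:ℝ) < (n:ℝ) - 2 * (k:ℝ) := by
    have h := (Nat.cast_lt (α := ℝ)).mpr hn
    push_cast at h
    linarith
  set b0 : ℝ := ((n:ℝ) - 2 * (k:ℝ)) / 2 with hb0
  set P : ℝ := ∏ j ∈ Finset.range (2 * k), ((n:ℝ) + 2 * (j:ℝ) - 2 * (k:ℝ)) with hPdef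
  have hPpos : 0 < P := by
    rw [hPdef]
    refine Finset.prod_pos fun j _ => ?_
    have : (0:ℝ) ≤ (j:ℝ) := Nat.cast_nonneg j
    linarith
  have haeq : ank n k = P ^ (-(1 / (k:ℝ))) := by rw [hPdef, ank]
  have ha : 0 < ank n k := by
    rw [haeq]
    exact Real.rpow_pos_of_pos hPpos _
  have hU : Ufun n k = G (ank n k) (-b0) := rfl
  rw [hU, iter_lap ha (-b0) k]
  beta_reduce
  rw [Finset.sum_range_succ]
  have hzero : ∀ i ∈ Finset.range k,
      Cf (ank n k) n (-b0) k i * G (ank n k) (-b0 - (k:ℝ) - (i:ℝ)) x = 0 := by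
    intro i hi
    have hik : i < k := Finset.mem_range.mp hi
    rw [Cf_closed]
    have hmem : k - 1 ∈ Finset.Ico i k := Finset.mem_Ico.mpr ⟨by omega, by omega⟩
    have hQ0 : Qf (n:ℝ) b0 i k = 0 := by
      refine Finset.prod_eq_zero hmem ?_
      rw [hb0]
      push_cast [Nat.cast_sub hk1]
      ring
    rw [hQ0]
    ring
  rw [Finset.sum_eq_zero hzero, zero_add]
  rw [Cf_closed, Nat.choose_self, Qf_self]
  have h2P : (2:ℝ) ^ (k + k) * Pf b0 (k + k) = P := by
    rw [hPdef, Pf, show k + k = 2 * k by omega]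
    rw [show ((2:ℝ)) ^ (2 * k) = ∏ _j ∈ Finset.range (2 * k), (2:ℝ) by
      rw [Finset.prod_const, Finset.card_range]]
    rw [← Finset.prod_mul_distrib]
    refine Finset.prod_congr rfl fun j _ => ?_
    rw [hb0]
    ring
  have hak : (ank n k) ^ k * ((2:ℝ) ^ (k + k) * Pf b0 (k + k)) = 1 := by
    rw [h2P, haeq, ← Real.rpow_natCast (P ^ (-(1 / (k:ℝ)))) k, ← Real.rpow_mul hPpos.le,
      show (-(1 / (k:ℝ))) * (k:ℝ) = -1 by field_simp, Real.rpow_neg_one]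
    exact inv_mul_cancel₀ hPpos.ne'
  have hG : G (ank n k) (-b0) x ^ (((n:ℝ) + 2 * (k:ℝ)) / ((n:ℝ) - 2 * (k:ℝ)))
      = G (ank n k) (-b0 - (k:ℝ) - (k:ℝ)) x := by
    have h1 : G (ank n k) ((-b0) * (((n:ℝ) + 2 * (k:ℝ)) / ((n:ℝ) - 2 * (k:ℝ)))) x
        = (G (ank n k) (-b0) x) ^ (((n:ℝ) + 2 * (k:ℝ)) / ((n:ℝ) - 2 * (k:ℝ))) :=
      Real.rpow_mul (hv_pos ha x).le _ _
    rw [← h1]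
    congr 1
    rw [hb0]
    field_simp
    ring
  rw [hG]
  linear_combination (G (ank n k) (-b0 - (k:ℝ) - (k:ℝ)) x) * hak

end
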